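/- Let γ be a path in [n]×[k]. (1) For every face map d_r : [n] → [n+1] there are a unique index κ and a unique path γ' in [n+1]×[k] with γ' ∘ d_κ = (d_r × id) ∘ γ, and for all (i,j) ∈ [n+k]×[k] one has E_{γ'}(d_κ(i), j) = (d_r × id)(E_γ(i,j)). (2) For every face map d_t : [k] → [k+1] there are a unique index κ and a unique path γ' in [n]×[k+1] with γ' ∘ d_κ = (id × d_t) ∘ γ, and for all (i,j) ∈ [n+k]×[k] one has E_{γ'}(d_κ(i), d_t(j)) = (id × d_t)(E_γ(i,j)). -/

import Mathlib

/-- `γ` is a path in `[n] × [k]` (a simplex of maximal dimension of `Δⁿ × Δᵏ`):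
it starts at `(0,0)`, ends at `(n,k)`, and each step increases exactly one
coordinate by exactly `1`.  The parameter `m` records the length of the path;
necessarily `m = n + k`. -/
def IsPath (n k m : ℕ) (γ : Fin (m + 1) → Fin (n + 1) × Fin (k + 1)) : Prop :=
  γ 0 = (0, 0) ∧
  γ (Fin.last m) = (Fin.last n, Fin.last k) ∧
  ∀ i : Fin m,
    (((γ i.succ).1 : ℕ) = ((γ i.castSucc).1 : ℕ) + 1 ∧ (γ i.succ).2 = (γ i.castSucc).2) ∨
    ((γ i.succ).1 = (γ i.castSucc).1 ∧ ((γ i.succ).2 : ℕ) = ((γ i.castSucc).2 : ℕ) + 1)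

/-- The extension `E_γ : [n+k] × [k] → [n] × [k]` of a path `γ`, given by
`E_γ(i, j) = (a_i, max (b_i) j)` where `γ i = (a_i, b_i)`. -/
def pathExt (n k m : ℕ) (γ : Fin (m + 1) → Fin (n + 1) × Fin (k + 1)) :
    Fin (m + 1) × Fin (k + 1) → Fin (n + 1) × Fin (k + 1) :=
  fun p => ((γ p.1).1, max (γ p.1).2 p.2)

/-- The strict order on paths: `γ₁ < γ₂` if at the least index `s` where they differ the
first coordinate of `γ₁ s` is smaller than that of `γ₂ s`. -/
def pathLT (n k m : ℕ) (γ₁ γ₂ : Fin (m + 1) → Fin (n + 1) × Fin (k + 1)) : Prop :=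
  ∃ s : Fin (m + 1), γ₁ s ≠ γ₂ s ∧ (∀ t : Fin (m + 1), t < s → γ₁ t = γ₂ t) ∧
    (γ₁ s).1 < (γ₂ s).1

namespace PathAux

lemma isPath_swap {n k m : ℕ} {γ : Fin (m + 1) → Fin (n + 1) × Fin (k + 1)}
    (h : IsPath n k m γ) : IsPath k n m (fun i => ((γ i).2, (γ i).1)) := by
  obtain ⟨h0, hl, hs⟩ := h
  refine ⟨by simp [h0], by simp [hl], fun i => ?_⟩
  rcases hs i with ⟨h1, h2⟩ | ⟨h1, h2⟩
  · exact Or.inr ⟨h2, h1⟩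
  · exact Or.inl ⟨h2, h1⟩


lemma hit (A : ℕ → ℕ) (hstep : ∀ i, A (i + 1) ≤ A i + 1) (M r : ℕ)
    (h0 : A 0 ≤ r) (hr : r ≤ A M) :
    ∃ c, c ≤ M ∧ A c = r ∧ ∀ j, j < c → A j < r := by
  have hex : ∃ i, r ≤ A i := ⟨M, hr⟩
  set c := Nat.find hex with hc
  have h1 : r ≤ A c := Nat.find_spec hex
  have h2 : ∀ j, j < c → A j < r := fun j hj => by
    have := Nat.find_min hex hj; omega
  have hcM : c ≤ M := Nat.find_min' hex hr
  refine ⟨c, hcM, ?_, h2⟩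
  rcases Nat.eq_zero_or_pos c with h | h
  · rw [h] at h1 ⊢; omega
  · have hs := hstep (c - 1)
    have hl := h2 (c - 1) (by omega)
    have he : c - 1 + 1 = c := by omega
    rw [he] at hs
    omega

lemma coord_sum {n k m : ℕ} {γ : Fin (m + 1) → Fin (n + 1) × Fin (k + 1)}
    (h : IsPath n k m γ) (i : Fin (m + 1)) :
    ((γ i).1 : ℕ) + ((γ i).2 : ℕ) = (i : ℕ) := by
  induction i using Fin.induction with
  | zero => simp [h.1]
  | succ i ih =>
    have hv : (i.succ : ℕ) = (i.castSucc : ℕ) + 1 := rfl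
    rcases h.2.2 i with ⟨h1, h2⟩ | ⟨h1, h2⟩
    · have := congrArg (fun x : Fin (k + 1) => (x : ℕ)) h2; omega
    · have := congrArg (fun x : Fin (n + 1) => (x : ℕ)) h1; omega

lemma core {n k m : ℕ} {γ : Fin (m + 1) → Fin (n + 1) × Fin (k + 1)}
    (h : IsPath n k m γ) (r : Fin (n + 2)) :
    ∃ (κ : Fin (m + 2)) (γ' : Fin (m + 2) → Fin (n + 2) × Fin (k + 1)),
      IsPath (n + 1) k (m + 1) γ' ∧
      (∀ x : Fin (m + 1), γ' (κ.succAbove x) = (r.succAbove (γ x).1, (γ x).2)) ∧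
      (∀ (κ' : Fin (m + 2)) (γ'' : Fin (m + 2) → Fin (n + 2) × Fin (k + 1)),
        IsPath (n + 1) k (m + 1) γ'' →
        (∀ x : Fin (m + 1), γ'' (κ'.succAbove x) = (r.succAbove (γ x).1, (γ x).2)) →
        κ' = κ ∧ γ'' = γ') := by
  obtain ⟨h0, hlast, hstep⟩ := h
  have h : IsPath n k m γ := ⟨h0, hlast, hstep⟩
  -- value-level step facts for γ
  have hstepv : ∀ x : Fin m,
      (((γ x.succ).1 : ℕ) = ((γ x.castSucc).1 : ℕ) + 1 ∧
        ((γ x.succ).2 : ℕ) = ((γ x.castSucc).2 : ℕ)) ∨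
      (((γ x.succ).1 : ℕ) = ((γ x.castSucc).1 : ℕ) ∧
        ((γ x.succ).2 : ℕ) = ((γ x.castSucc).2 : ℕ) + 1) := by
    intro x
    rcases hstep x with ⟨h1, h2⟩ | ⟨h1, h2⟩
    · exact Or.inl ⟨h1, congrArg Fin.val h2⟩
    · exact Or.inr ⟨congrArg Fin.val h1, h2⟩
  -- the totalized first-coordinate function
  set A : ℕ → ℕ := fun i => if hi : i < m + 1 then ((γ ⟨i, hi⟩).1 : ℕ) else n + 1 with hA
  have hAval : ∀ (j : ℕ) (hj : j < m + 1), A j = ((γ ⟨j, hj⟩).1 : ℕ) := fun j hj => dif_pos hj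
  have hAx : ∀ x : Fin (m + 1), A (x : ℕ) = ((γ x).1 : ℕ) := by
    intro x; rw [hAval x x.isLt]
  have hAtop : ∀ j : ℕ, m + 1 ≤ j → A j = n + 1 := fun j hj => dif_neg (by omega)
  have hlastv : ((γ (Fin.last m)).1 : ℕ) = n ∧ ((γ (Fin.last m)).2 : ℕ) = k := by
    rw [hlast]; simp
  have hA0 : A 0 = 0 := by
    rw [hAval 0 (by omega)]
    have e : (⟨0, by omega⟩ : Fin (m + 1)) = 0 := by ext; simp
    rw [e, h0]; simp
  have hAm : A m = n := by
    rw [hAval m (by omega)]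
    have e : (⟨m, by omega⟩ : Fin (m + 1)) = Fin.last m := rfl
    rw [e]; exact hlastv.1
  have hAS : ∀ i, A i ≤ A (i + 1) ∧ A (i + 1) ≤ A i + 1 := by
    intro i
    by_cases hi : i + 1 < m + 1
    · have hi' : i < m + 1 := by omega
      have him : i < m := by omega
      have hsi := hstepv ⟨i, him⟩
      have e1 : (⟨i, him⟩ : Fin m).castSucc = ⟨i, hi'⟩ := rfl
      have e2 : (⟨i, him⟩ : Fin m).succ = ⟨i + 1, hi⟩ := rfl
      rw [e1, e2] at hsi
      rw [hAval i hi', hAval (i + 1) hi]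
      omega
    · by_cases hi2 : i < m + 1
      · have him : i = m := by omega
        subst him
        rw [hAtop (i + 1) (by omega), hAm]
        omega
      · rw [hAtop i (by omega), hAtop (i + 1) (by omega)]
        omega
  have hAmono : Monotone A := monotone_nat_of_le_succ (fun i => (hAS i).1)
  obtain ⟨c, hcM, hAc, hclt⟩ := hit A (fun i => (hAS i).2) (m + 1) (r : ℕ)
    (by rw [hA0]; omega) (by rw [hAtop (m + 1) le_rfl]; omega)
  have hminm : min c m < m + 1 := by omega
  -- second coordinate of the inserted vertex
  have hbins : ((γ ⟨min c m, hminm⟩).2 : ℕ) = c - (r : ℕ) := by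
    have hs := coord_sum h ⟨min c m, hminm⟩
    simp only at hs
    have h1 := hAval (min c m) hminm
    by_cases hcm : c ≤ m
    · have h2 : A (min c m) = A c := congrArg A (by omega)
      omega
    · have h2 : A (min c m) = A m := congrArg A (by omega)
      have h3 := hAtop c (by omega)
      omega
  have hcm2 : c < m + 2 := by omega
  set κ : Fin (m + 2) := ⟨c, hcm2⟩ with hκ
  set γ' : Fin (m + 2) → Fin (n + 2) × Fin (k + 1) := fun y =>
    if hy : (y : ℕ) < c then ((γ ⟨(y : ℕ), by omega⟩).1.castSucc, (γ ⟨(y : ℕ), by omega⟩).2)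
    else if hy2 : (y : ℕ) = c then (r, (γ ⟨min c m, hminm⟩).2)
    else ((γ ⟨(y : ℕ) - 1, by omega⟩).1.succ, (γ ⟨(y : ℕ) - 1, by omega⟩).2) with hγ'
  have E1 : ∀ (y : Fin (m + 2)) (x : Fin (m + 1)), (y : ℕ) = (x : ℕ) → (x : ℕ) < c →
      γ' y = ((γ x).1.castSucc, (γ x).2) := by
    intro y x hyx hx
    have e : ∀ p : (y : ℕ) < m + 1, (⟨(y : ℕ), p⟩ : Fin (m + 1)) = x := fun p => by
      ext; simp [hyx]
    rw [hγ']
    simp only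
    rw [dif_pos (by omega), e]
  have E2 : ∀ (y : Fin (m + 2)), (y : ℕ) = c → γ' y = (r, (γ ⟨min c m, hminm⟩).2) := by
    intro y hy
    rw [hγ']
    simp only
    rw [dif_neg (by omega), dif_pos hy]
  have E3 : ∀ (y : Fin (m + 2)) (x : Fin (m + 1)), (y : ℕ) = (x : ℕ) + 1 → c ≤ (x : ℕ) →
      γ' y = ((γ x).1.succ, (γ x).2) := by
    intro y x hyx hx
    have e : ∀ p : (y : ℕ) - 1 < m + 1, (⟨(y : ℕ) - 1, p⟩ : Fin (m + 1)) = x := fun p => by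
      ext; simp; omega
    rw [hγ']
    simp only
    rw [dif_neg (by omega), dif_neg (by omega), e]
  have hrlt : (r : ℕ) < n + 2 := r.isLt
  -- γ' is a path
  have hpath' : IsPath (n + 1) k (m + 1) γ' := by
    refine ⟨?_, ?_, ?_⟩
    · by_cases hc0 : 0 < c
      · rw [E1 0 0 (by simp) (by simpa using hc0), h0]
        simp [Prod.ext_iff, Fin.ext_iff]
      · have hc : c = 0 := by omega
        rw [E2 0 (by simp [hc])]
        have hr0 : (r : ℕ) = 0 := by rw [← hAc, hc, hA0]
        have e : (⟨min c m, hminm⟩ : Fin (m + 1)) = 0 := by ext; simp; omega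
        rw [e, h0]
        simp [Prod.ext_iff, Fin.ext_iff, hr0]
    · by_cases hc : c = m + 1
      · rw [E2 (Fin.last (m + 1)) (by simp [hc])]
        have e : (⟨min c m, hminm⟩ : Fin (m + 1)) = Fin.last m := by ext; simp [hc]
        rw [e, hlast]
        have hr : (r : ℕ) = n + 1 := by rw [← hAc, hc]; exact hAtop (m + 1) le_rfl
        simp [Prod.ext_iff, Fin.ext_iff, hr]
      · rw [E3 (Fin.last (m + 1)) (Fin.last m) (by simp) (by simp; omega), hlast]
        simp [Prod.ext_iff, Fin.ext_iff]
    · intro i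
      by_cases h1 : (i : ℕ) + 1 < c
      · have him : (i : ℕ) < m := by omega
        have e1 : (⟨(i : ℕ), him⟩ : Fin m).castSucc = i := by ext; simp
        rw [E1 i.castSucc i (by simp) (by omega),
          E1 i.succ (⟨(i : ℕ), him⟩ : Fin m).succ (by simp) (by simp; omega)]
        have hsv := hstepv ⟨(i : ℕ), him⟩
        rw [e1] at hsv
        dsimp only
        simp only [Fin.ext_iff, Fin.coe_castSucc]
        omega
      · by_cases h2 : (i : ℕ) + 1 = c
        · rw [E1 i.castSucc i (by simp) (by omega), E2 i.succ (by simp only [Fin.val_succ]; omega)]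
          by_cases hcm : c ≤ m
          · have him : (i : ℕ) < m := by omega
            have e1 : (⟨(i : ℕ), him⟩ : Fin m).castSucc = i := by ext; simp
            have e2 : (⟨(i : ℕ), him⟩ : Fin m).succ = ⟨min c m, hminm⟩ := by ext; simp; omega
            have hsv := hstepv ⟨(i : ℕ), him⟩
            rw [e1, e2] at hsv
            have hq1 := hAval (min c m) hminm
            have hq2 : A (min c m) = A c := congrArg A (by omega)
            have hq3 := hclt (i : ℕ) (by omega)
            have hq4 := hAx i
            dsimp only
            simp only [Fin.ext_iff, Fin.coe_castSucc]
            omega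
          · have hc : c = m + 1 := by omega
            have e : (⟨min c m, hminm⟩ : Fin (m + 1)) = Fin.last m := by ext; simp [hc]
            have ei : i = Fin.last m := by ext; simp; omega
            have hr : (r : ℕ) = n + 1 := by rw [← hAc, hc]; exact hAtop (m + 1) le_rfl
            have hl1 := hlastv.1
            rw [e, ei]
            dsimp only
            simp only [Fin.ext_iff, Fin.coe_castSucc, and_true, true_and]
            omega
        · by_cases h3 : (i : ℕ) = c
          · rw [E2 i.castSucc (by simp; omega), E3 i.succ i (by simp) (by omega)]
            have e : (⟨min c m, hminm⟩ : Fin (m + 1)) = i := by ext; simp; omega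
            rw [e]
            have hq : ((γ i).1 : ℕ) = (r : ℕ) := by rw [← hAx i, h3]; exact hAc
            dsimp only
            simp only [Fin.ext_iff, Fin.val_succ, and_true, true_and]
            omega
          · have hci : c < (i : ℕ) := by omega
            have him1 : (i : ℕ) - 1 < m + 1 := by omega
            have hzm : (i : ℕ) - 1 < m := by omega
            have e1 : (⟨(i : ℕ) - 1, hzm⟩ : Fin m).castSucc = ⟨(i : ℕ) - 1, him1⟩ := rfl
            have e2 : (⟨(i : ℕ) - 1, hzm⟩ : Fin m).succ = i := by ext; simp; omega
            rw [E3 i.castSucc ⟨(i : ℕ) - 1, him1⟩ (by simp; omega) (by simp; omega),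
              E3 i.succ i (by simp) (by omega)]
            have hsv := hstepv ⟨(i : ℕ) - 1, hzm⟩
            rw [e1, e2] at hsv
            dsimp only
            simp only [Fin.ext_iff, Fin.val_succ]
            omega
  -- compatibility
  have hcompat : ∀ x : Fin (m + 1), γ' (κ.succAbove x) = (r.succAbove (γ x).1, (γ x).2) := by
    intro x
    by_cases hx : (x : ℕ) < c
    · have hsa : κ.succAbove x = x.castSucc :=
        Fin.succAbove_of_castSucc_lt κ x (show ((x : ℕ) : ℕ) < c from hx)
      rw [hsa, E1 x.castSucc x (by simp) hx]
      have har : (γ x).1.castSucc < r := by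
        have := hclt (x : ℕ) hx; have := hAx x
        exact show ((γ x).1 : ℕ) < (r : ℕ) by omega
      rw [Fin.succAbove_of_castSucc_lt r (γ x).1 har]
    · have hsa : κ.succAbove x = x.succ :=
        Fin.succAbove_of_le_castSucc κ x (show c ≤ (x : ℕ) by omega)
      rw [hsa, E3 x.succ x (by simp) (by omega)]
      have har : r ≤ (γ x).1.castSucc := by
        have h1 := hAmono (show c ≤ (x : ℕ) by omega)
        have := hAx x
        exact show (r : ℕ) ≤ ((γ x).1 : ℕ) by omega
      rw [Fin.succAbove_of_le_castSucc r (γ x).1 har]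
  refine ⟨κ, γ', hpath', hcompat, ?_⟩
  -- uniqueness
  intro κ' γ'' hp'' hc''
  obtain ⟨h0'', hlast'', hstep''⟩ := hp''
  have hp'' : IsPath (n + 1) k (m + 1) γ'' := ⟨h0'', hlast'', hstep''⟩
  have hstepv'' : ∀ x : Fin (m + 1),
      (((γ'' x.succ).1 : ℕ) = ((γ'' x.castSucc).1 : ℕ) + 1 ∧
        ((γ'' x.succ).2 : ℕ) = ((γ'' x.castSucc).2 : ℕ)) ∨
      (((γ'' x.succ).1 : ℕ) = ((γ'' x.castSucc).1 : ℕ) ∧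
        ((γ'' x.succ).2 : ℕ) = ((γ'' x.castSucc).2 : ℕ) + 1) := by
    intro x
    rcases hstep'' x with ⟨ha, hb⟩ | ⟨ha, hb⟩
    · exact Or.inl ⟨ha, congrArg Fin.val hb⟩
    · exact Or.inr ⟨congrArg Fin.val ha, hb⟩
  set B : ℕ → ℕ := fun i => if hi : i < m + 2 then ((γ'' ⟨i, hi⟩).1 : ℕ) else n + 2 with hB
  have hBval : ∀ (j : ℕ) (hj : j < m + 2), B j = ((γ'' ⟨j, hj⟩).1 : ℕ) := fun j hj => dif_pos hj
  have hBx : ∀ y : Fin (m + 2), B (y : ℕ) = ((γ'' y).1 : ℕ) := fun y => by rw [hBval y y.isLt]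
  have hBtop : ∀ j : ℕ, m + 2 ≤ j → B j = n + 2 := fun j hj => dif_neg (by omega)
  have hB0 : B 0 = 0 := by
    rw [hBval 0 (by omega)]
    have e : (⟨0, by omega⟩ : Fin (m + 2)) = 0 := by ext; simp
    rw [e, h0'']
    simp
  have hBm : B (m + 1) = n + 1 := by
    rw [hBval (m + 1) (by omega)]
    have e : (⟨m + 1, by omega⟩ : Fin (m + 2)) = Fin.last (m + 1) := rfl
    rw [e, hlast'']
    simp
  have hBS : ∀ i, B i ≤ B (i + 1) ∧ B (i + 1) ≤ B i + 1 := by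
    intro i
    by_cases hi : i + 1 < m + 2
    · have hi' : i < m + 2 := by omega
      have him : i < m + 1 := by omega
      have hsi := hstepv'' ⟨i, him⟩
      have e1 : (⟨i, him⟩ : Fin (m + 1)).castSucc = ⟨i, hi'⟩ := rfl
      have e2 : (⟨i, him⟩ : Fin (m + 1)).succ = ⟨i + 1, hi⟩ := rfl
      rw [e1, e2] at hsi
      rw [hBval i hi', hBval (i + 1) hi]
      omega
    · by_cases hi2 : i < m + 2
      · have him : i = m + 1 := by omega
        rw [him, hBtop (m + 1 + 1) (by omega), hBm]
        omega
      · rw [hBtop i (by omega), hBtop (i + 1) (by omega)]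
        omega
  have hBmono : Monotone B := monotone_nat_of_le_succ (fun i => (hBS i).1)
  obtain ⟨c'', hcM'', hBc, hBlt⟩ := hit B (fun i => (hBS i).2) (m + 1) (r : ℕ)
    (by rw [hB0]; omega) (by rw [hBm]; omega)
  have hsav : ∀ a : Fin (n + 1),
      ((r.succAbove a : Fin (n + 2)) : ℕ) = if (a : ℕ) < (r : ℕ) then (a : ℕ) else (a : ℕ) + 1 := by
    intro a
    by_cases hh : (a : ℕ) < (r : ℕ)
    · rw [Fin.succAbove_of_castSucc_lt r a hh, if_pos hh]; rfl
    · rw [Fin.succAbove_of_le_castSucc r a (show (r : ℕ) ≤ (a : ℕ) by omega), if_neg hh]; rfl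
  have hg1 : (γ'' ⟨c'', by omega⟩).1 = r := by
    apply Fin.val_injective
    rw [← hBx ⟨c'', by omega⟩]
    exact hBc
  have hy0 : (⟨c'', by omega⟩ : Fin (m + 2)) = κ' := by
    by_contra hne
    obtain ⟨x, hx⟩ := Fin.exists_succAbove_eq hne
    have hcx := hc'' x
    rw [hx] at hcx
    have : (γ'' ⟨c'', by omega⟩).1 = r.succAbove (γ x).1 := by rw [hcx]
    exact Fin.succAbove_ne r (γ x).1 (this ▸ hg1)
  have hkv : (κ' : ℕ) = c'' := by rw [← hy0]
  have hlt'' : ∀ x : Fin (m + 1), (x : ℕ) < (κ' : ℕ) → ((γ x).1 : ℕ) < (r : ℕ) := by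
    intro x hx
    have hsa : κ'.succAbove x = x.castSucc :=
      Fin.succAbove_of_castSucc_lt κ' x hx
    have hcx := hc'' x
    rw [hsa] at hcx
    have h1 : B (x : ℕ) = ((γ'' x.castSucc).1 : ℕ) := hBx x.castSucc
    have h2 := hBlt (x : ℕ) (by omega)
    rw [h1, hcx] at h2
    have h3 := hsav (γ x).1
    dsimp only at h2
    rw [h3] at h2
    by_cases hh : ((γ x).1 : ℕ) < (r : ℕ)
    · exact hh
    · rw [if_neg hh] at h2; omega
  have hge'' : ∀ x : Fin (m + 1), (κ' : ℕ) ≤ (x : ℕ) → (r : ℕ) ≤ ((γ x).1 : ℕ) := by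
    intro x hx
    have hsa : κ'.succAbove x = x.succ :=
      Fin.succAbove_of_le_castSucc κ' x hx
    have hcx := hc'' x
    rw [hsa] at hcx
    have h1 : B ((x : ℕ) + 1) = ((γ'' x.succ).1 : ℕ) := hBx x.succ
    have h2 : (r : ℕ) ≤ B ((x : ℕ) + 1) := by
      rw [← hBc]; exact hBmono (by omega)
    rw [h1, hcx] at h2
    have h3 := hsav (γ x).1
    dsimp only at h2
    rw [h3] at h2
    by_cases hh : ((γ x).1 : ℕ) < (r : ℕ)
    · rw [if_pos hh] at h2; omega
    · omega
  have hkc : (κ' : ℕ) = c := by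
    by_contra hne
    rcases Nat.lt_or_ge (κ' : ℕ) c with hlt | hge
    · have hxm : (κ' : ℕ) < m + 1 := by omega
      have := hge'' ⟨(κ' : ℕ), hxm⟩ le_rfl
      have h2 := hclt (κ' : ℕ) hlt
      have h3 := hAx ⟨(κ' : ℕ), hxm⟩
      simp only [Fin.val_mk] at h3
      omega
    · have hcc : c < (κ' : ℕ) := by omega
      have hxm : c < m + 1 := by omega
      have := hlt'' ⟨c, hxm⟩ hcc
      have h3 := hAx ⟨c, hxm⟩
      simp only [Fin.val_mk] at h3
      omega
  have hκeq : κ' = κ := Fin.val_injective (by rw [hkc, hκ])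
  refine ⟨hκeq, funext fun y => ?_⟩
  rw [hκeq] at hc''
  by_cases hy : y = κ
  · have hg1' : (γ'' κ).1 = r := by
      have e : (⟨c'', by omega⟩ : Fin (m + 2)) = κ := hy0.trans hκeq
      rw [← e]; exact hg1
    have hs'' := coord_sum hp'' κ
    have hκval : (κ : ℕ) = c := by rw [hκ]
    rw [hy, E2 κ (by rw [hκ])]
    refine Prod.ext hg1' ?_
    apply Fin.val_injective
    have hg1v : ((γ'' κ).1 : ℕ) = (r : ℕ) := congrArg Fin.val hg1'
    dsimp only
    omega
  · obtain ⟨x, hx⟩ := Fin.exists_succAbove_eq hy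
    rw [← hx, hc'' x, hcompat x]

end PathAux

/-- Compatibility of path extensions with face maps `d_r = Fin.succAbove r`.
(1) For every face map `d_r : [n] → [n+1]` there are a unique index `κ` and a unique path
`γ'` in `[n+1] × [k]` with `γ' ∘ d_κ = (d_r × id) ∘ γ`, and
`E_{γ'}(d_κ i, j) = (d_r × id)(E_γ(i, j))`.
(2) For every face map `d_t : [k] → [k+1]` there are a unique index `κ` and a unique path
`γ'` in `[n] × [k+1]` with `γ' ∘ d_κ = (id × d_t) ∘ γ`, and
`E_{γ'}(d_κ i, d_t j) = (id × d_t)(E_γ(i, j))`. -/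
theorem pathExt_compat_faces (n k : ℕ)
    (γ : Fin (n + k + 1) → Fin (n + 1) × Fin (k + 1)) (hγ : IsPath n k (n + k) γ) :
    (∀ r : Fin (n + 2),
      ∃ (κ : Fin (n + k + 2)) (γ' : Fin (n + k + 2) → Fin (n + 2) × Fin (k + 1)),
        IsPath (n + 1) k (n + k + 1) γ' ∧
        (∀ x : Fin (n + k + 1), γ' (κ.succAbove x) = (r.succAbove (γ x).1, (γ x).2)) ∧
        (∀ (i : Fin (n + k + 1)) (j : Fin (k + 1)),
          pathExt (n + 1) k (n + k + 1) γ' (κ.succAbove i, j) =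
            (r.succAbove (pathExt n k (n + k) γ (i, j)).1,
              (pathExt n k (n + k) γ (i, j)).2)) ∧
        (∀ (κ' : Fin (n + k + 2)) (γ'' : Fin (n + k + 2) → Fin (n + 2) × Fin (k + 1)),
          IsPath (n + 1) k (n + k + 1) γ'' →
          (∀ x : Fin (n + k + 1), γ'' (κ'.succAbove x) = (r.succAbove (γ x).1, (γ x).2)) →
          κ' = κ ∧ γ'' = γ')) ∧
    (∀ t : Fin (k + 2),
      ∃ (κ : Fin (n + k + 2)) (γ' : Fin (n + k + 2) → Fin (n + 1) × Fin (k + 2)),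
        IsPath n (k + 1) (n + k + 1) γ' ∧
        (∀ x : Fin (n + k + 1), γ' (κ.succAbove x) = ((γ x).1, t.succAbove (γ x).2)) ∧
        (∀ (i : Fin (n + k + 1)) (j : Fin (k + 1)),
          pathExt n (k + 1) (n + k + 1) γ' (κ.succAbove i, t.succAbove j) =
            ((pathExt n k (n + k) γ (i, j)).1,
              t.succAbove (pathExt n k (n + k) γ (i, j)).2)) ∧
        (∀ (κ' : Fin (n + k + 2)) (γ'' : Fin (n + k + 2) → Fin (n + 1) × Fin (k + 2)),
          IsPath n (k + 1) (n + k + 1) γ'' →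
          (∀ x : Fin (n + k + 1), γ'' (κ'.succAbove x) = ((γ x).1, t.succAbove (γ x).2)) →
          κ' = κ ∧ γ'' = γ')) := by
  constructor
  · intro r
    obtain ⟨κ, γ', hp, hcompat, huniq⟩ := PathAux.core hγ r
    refine ⟨κ, γ', hp, hcompat, ?_, huniq⟩
    intro i j
    simp only [pathExt]
    rw [hcompat i]
  · intro t
    have hsw := PathAux.isPath_swap hγ
    obtain ⟨κ, δ, hp, hcompat, huniq⟩ := PathAux.core hsw t
    have hcompat' : ∀ x : Fin (n + k + 1),
        δ (κ.succAbove x) = (t.succAbove (γ x).2, (γ x).1) := fun x => hcompat x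
    refine ⟨κ, fun y => ((δ y).2, (δ y).1), PathAux.isPath_swap hp, ?_, ?_, ?_⟩
    · intro x
      show ((δ (κ.succAbove x)).2, (δ (κ.succAbove x)).1) = _
      rw [hcompat' x]
    · intro i j
      show ((δ (κ.succAbove i)).2, max (δ (κ.succAbove i)).1 (t.succAbove j)) = _
      rw [hcompat' i]
      simp only [pathExt]
      refine Prod.ext rfl ?_
      exact ((Fin.strictMono_succAbove t).monotone.map_max).symm
    · intro κ' γ'' hp'' hcomp''
      obtain ⟨hk, hg⟩ := huniq κ' (fun y => ((γ'' y).2, (γ'' y).1)) (PathAux.isPath_swap hp'')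
        (fun x => by
          show ((γ'' (κ'.succAbove x)).2, (γ'' (κ'.succAbove x)).1) = _
          rw [hcomp'' x])
      refine ⟨hk, funext fun y => ?_⟩
      have h2 := congrFun hg y
      show γ'' y = ((δ y).2, (δ y).1)
      rw [← h2]
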